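/- The pp-wave metric satisfies the vacuum Einstein equation, i.e. Ric_{ab}(p) = 0 for all p ∈ ℝ⁴ and all indices a, b, if and only if H satisfies the two-dimensional Laplace equation ∂₂∂₂H(p) + ∂₃∂₃H(p) = 0 for every p ∈ ℝ⁴ (H is harmonic in the transverse variables x and y). -/

import Mathlib

noncomputable section

open scoped BigOperators

/-- Partial derivative of `f : ℝ⁴ → ℝ` in the `μ`-th coordinate direction. -/
def pd (μ : Fin 4) (f : (Fin 4 → ℝ) → ℝ) (p : Fin 4 → ℝ) : ℝ :=
  fderiv ℝ f p (Pi.single μ 1)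

/-- The pp-wave metric `ds² = 2H du² + 2 du dv − dx² − dy²` in coordinates
`(v,u,x,y)`. -/
def gmet (H : (Fin 4 → ℝ) → ℝ) (p : Fin 4 → ℝ) : Matrix (Fin 4) (Fin 4) ℝ :=
  Matrix.of fun μ ν =>
    if μ = 1 ∧ ν = 1 then 2 * H p
    else if (μ = 0 ∧ ν = 1) ∨ (μ = 1 ∧ ν = 0) then 1
    else if (μ = 2 ∧ ν = 2) ∨ (μ = 3 ∧ ν = 3) then (-1 : ℝ)
    else 0

/-- The pointwise inverse of the pp-wave metric. -/
def ginv (H : (Fin 4 → ℝ) → ℝ) (p : Fin 4 → ℝ) : Matrix (Fin 4) (Fin 4) ℝ :=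
  Matrix.of fun μ ν =>
    if μ = 0 ∧ ν = 0 then -2 * H p
    else if (μ = 0 ∧ ν = 1) ∨ (μ = 1 ∧ ν = 0) then 1
    else if (μ = 2 ∧ ν = 2) ∨ (μ = 3 ∧ ν = 3) then (-1 : ℝ)
    else 0

/-- Christoffel symbols `Γ^l_{μν}` of the Levi-Civita connection of the pp-wave metric. -/
def Γpp (H : (Fin 4 → ℝ) → ℝ) (l μ ν : Fin 4) (p : Fin 4 → ℝ) : ℝ :=
  (1 / 2) * ∑ σ : Fin 4, ginv H p l σ *
    (pd μ (fun q => gmet H q ν σ) p + pd ν (fun q => gmet H q μ σ) p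
      - pd σ (fun q => gmet H q μ ν) p)

/-- Riemann curvature components
`R^a_{bμν} = ∂_μ Γ^a_{bν} − ∂_ν Γ^a_{bμ} + Σ_γ (Γ^a_{γμ}Γ^γ_{bν} − Γ^a_{γν}Γ^γ_{bμ})`. -/
def Riem (H : (Fin 4 → ℝ) → ℝ) (a b μ ν : Fin 4) (p : Fin 4 → ℝ) : ℝ :=
  pd μ (Γpp H a b ν) p - pd ν (Γpp H a b μ) p
    + ∑ γ : Fin 4, (Γpp H a γ μ p * Γpp H γ b ν p - Γpp H a γ ν p * Γpp H γ b μ p)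

/-- Ricci tensor `Ric_{bν} = Σ_a R^a_{baν}`. -/
def Ricci (H : (Fin 4 → ℝ) → ℝ) (b ν : Fin 4) (p : Fin 4 → ℝ) : ℝ :=
  ∑ a : Fin 4, Riem H a b a ν p

/-- Scalar curvature `S = Σ_{β,ν} ginv^{βν} Ric_{βν}`. -/
def Scal (H : (Fin 4 → ℝ) → ℝ) (p : Fin 4 → ℝ) : ℝ :=
  ∑ b : Fin 4, ∑ ν : Fin 4, ginv H p b ν * Ricci H b ν p


section PPWaveAux

variable {H : (Fin 4 → ℝ) → ℝ}

lemma pd_const' (μ : Fin 4) (c : ℝ) (p : Fin 4 → ℝ) : pd μ (fun _ => c) p = 0 := by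
  simp [pd]

lemma pd_comm' (hH : ContDiff ℝ (⊤ : ℕ∞) H) (μ ν : Fin 4) (p : Fin 4 → ℝ) :
    pd μ (pd ν H) p = pd ν (pd μ H) p := by
  have hfd : DifferentiableAt ℝ (fderiv ℝ H) p := by
    refine ((hH.fderiv_right (m := ((⊤ : ℕ∞) : WithTop ℕ∞)) ?_).differentiable ?_) p
    · exact_mod_cast le_top
    · simp
  have key : ∀ (v w : Fin 4 → ℝ),
      fderiv ℝ (fun q => fderiv ℝ H q v) p w = fderiv ℝ (fderiv ℝ H) p w v := by
    intro v w
    have h := fderiv_clm_apply (𝕜 := ℝ) hfd (differentiableAt_const v)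
    rw [show (fun q => fderiv ℝ H q v) = (fun q => (fderiv ℝ H q) ((fun _ => v) q)) from rfl,
      h]
    simp
  have symm : IsSymmSndFDerivAt ℝ H p :=
    hH.contDiffAt.isSymmSndFDerivAt (by rw [minSmoothness_of_isRCLikeNormedField]; exact WithTop.coe_le_coe.mpr (le_top : (2 : ℕ∞) ≤ ⊤))
  have e1 : pd ν H = fun q => fderiv ℝ H q (Pi.single ν 1) := rfl
  have e2 : pd μ H = fun q => fderiv ℝ H q (Pi.single μ 1) := rfl
  rw [pd, pd, e1, e2, key, key]
  exact symm _ _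

lemma pd_gmet' (hH : ContDiff ℝ (⊤ : ℕ∞) H) (μ ν σ : Fin 4) (p : Fin 4 → ℝ) :
    pd μ (fun q => gmet H q ν σ) p = if ν = 1 ∧ σ = 1 then 2 * pd μ H p else 0 := by
  unfold gmet pd
  by_cases h : ν = 1 ∧ σ = 1
  · simp only [Matrix.of_apply, if_pos h]
    rw [fderiv_const_mul ((hH.differentiable (by simp)) p)]
    simp
  · simp only [Matrix.of_apply, if_neg h]
    simp

lemma gamma_fun' (hH : ContDiff ℝ (⊤ : ℕ∞) H) (h0 : ∀ p, pd 0 H p = 0) (l μ ν : Fin 4) :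
    Γpp H l μ ν = fun p =>
      (if l = 0 ∧ μ = 1 then pd ν H p else 0) + (if l = 0 ∧ ν = 1 then pd μ H p else 0)
      - (if l = 0 ∧ μ = 1 ∧ ν = 1 then pd 1 H p else 0)
      + (if (l = 2 ∨ l = 3) ∧ μ = 1 ∧ ν = 1 then pd l H p else 0) := by
  funext p
  unfold Γpp
  rw [Fin.sum_univ_four]
  simp only [pd_gmet' hH]
  unfold ginv
  fin_cases l <;>
    by_cases hμ : μ = 1 <;> by_cases hν : ν = 1 <;>
      simp [hμ, hν, h0 p]

lemma ricci_eq' (hH : ContDiff ℝ (⊤ : ℕ∞) H) (h0 : ∀ p, pd 0 H p = 0) (b ν : Fin 4)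
    (p : Fin 4 → ℝ) :
    Ricci H b ν p =
      if b = 1 ∧ ν = 1 then pd 2 (pd 2 H) p + pd 3 (pd 3 H) p else 0 := by
  have hpd0 : pd 0 H = fun _ => 0 := funext h0
  have hA : ∀ (μ : Fin 4) (q : Fin 4 → ℝ), pd μ (pd 0 H) q = 0 := by
    intro μ q; rw [hpd0]; exact pd_const' μ 0 q
  have hB : ∀ (μ : Fin 4) (q : Fin 4 → ℝ), pd 0 (pd μ H) q = 0 := by
    intro μ q; rw [pd_comm' hH]; exact hA μ q
  unfold Ricci Riem
  simp only [Fin.sum_univ_four, gamma_fun' hH h0]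
  fin_cases b <;> fin_cases ν <;>
    simp [h0, hA, hB, pd_const']

end PPWaveAux

/-- The pp-wave metric solves the vacuum Einstein equation `Ric = 0` iff `H` is
harmonic in the transverse variables: `∂₂∂₂H + ∂₃∂₃H = 0`. -/
theorem pp_wave_vacuum_iff_harmonic (H : (Fin 4 → ℝ) → ℝ)
    (hH : ContDiff ℝ (⊤ : ℕ∞) H) (h0 : ∀ p, pd 0 H p = 0) :
    (∀ (p : Fin 4 → ℝ) (a b : Fin 4), Ricci H a b p = 0) ↔
      (∀ p : Fin 4 → ℝ, pd 2 (pd 2 H) p + pd 3 (pd 3 H) p = 0) := by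
  constructor
  · intro h p
    have hp := h p 1 1
    rwa [ricci_eq' hH h0, if_pos ⟨rfl, rfl⟩] at hp
  · intro h p a b
    rw [ricci_eq' hH h0]
    split_ifs with hab
    · exact h p
    · rfl
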